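/- Let ι be a finite index set, K : ι → ι → ℝ symmetric, D : ι → ℝ with D_m > 0 for all m, θ* : ι → ℝ, and set P*_m = Σ_n K_{mn} · sin(θ*_m − θ*_n). Suppose θ : ℝ → ι → ℝ is differentiable and satisfies, for all t and all m, the reduced swing equation (θ_m)'(t) = D_m^{−1} · (P*_m − Σ_n K_{mn} · sin(θ_m(t) − θ_n(t))). Define H(t) = Σ_m (1/2) D_m (θ*_m − θ_m(t))². Then H is differentiable and for all t, H'(t) = Σ_{(m,n), m < n} K_{mn} · (δ_{mn}(t) − δ*_{mn}) · (sin δ*_{mn} − sin δ_{mn}(t)), where δ_{mn}(t) = θ_m(t) − θ_n(t) and δ*_{mn} = θ*_m − θ*_n. -/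

import Mathlib

open Finset Real

/-- Splitting a sum over all pairs into the strictly-ordered pairs (counted with
their swaps) plus the diagonal. -/
theorem pair_split {ι : Type*} [Fintype ι] [LinearOrder ι] (F : ι × ι → ℝ) :
    ∑ p : ι × ι, F p =
      (∑ p ∈ univ.filter (fun p : ι × ι => p.1 < p.2), (F p + F p.swap)) + ∑ m, F (m, m) := by
  have h2 : ∑ p ∈ univ.filter (fun p : ι × ι => ¬ p.1 < p.2), F p =
      (∑ p ∈ univ.filter (fun p : ι × ι => p.1 < p.2), F p.swap) + ∑ m, F (m, m) := by
    rw [← Finset.sum_filter_add_sum_filter_not (univ.filter (fun p : ι × ι => ¬ p.1 < p.2))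
      (fun p : ι × ι => p.2 < p.1) F, Finset.filter_filter, Finset.filter_filter]
    congr 1
    · refine Finset.sum_nbij' (fun p => p.swap) (fun p => p.swap) ?_ ?_ ?_ ?_ ?_
      · intro p hp; simp only [mem_filter, mem_univ, true_and] at hp ⊢
        exact hp.2
      · intro p hp; simp only [mem_filter, mem_univ, true_and] at hp ⊢
        exact ⟨not_lt.mpr hp.le, hp⟩
      · intro p _; simp
      · intro p _; simp
      · intro p _; simp
    · refine Finset.sum_nbij' (fun p => p.1) (fun m => (m, m)) ?_ ?_ ?_ ?_ ?_
      · intro p _; simp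
      · intro m _; simp
      · intro p hp
        simp only [mem_filter, mem_univ, true_and, not_lt] at hp
        have h : p.2 = p.1 := le_antisymm hp.1 hp.2
        simp only [Prod.ext_iff]; exact ⟨trivial, h.symm⟩
      · intro m _; rfl
      · intro p hp
        simp only [mem_filter, mem_univ, true_and, not_lt] at hp
        have h : p.2 = p.1 := le_antisymm hp.1 hp.2
        congr 1
        simp only [Prod.ext_iff]; exact ⟨trivial, h⟩
  rw [← Finset.sum_filter_add_sum_filter_not univ (fun p : ι × ι => p.1 < p.2) F, h2,
    Finset.sum_add_distrib]
  ring

/-- Along any differentiable solution of the reduced (inertia-free) swing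
equation `θ̇_m = D_m⁻¹ (P*_m - ∑ n, K m n sin (θ_m - θ_n))`, the Lyapunov
function `H t = ∑ m, (1/2) * D m * (θs m - θ t m)²` is differentiable with
derivative `∑_{m<n} K m n (δ_{mn}(t) - δ*_{mn}) (sin δ*_{mn} - sin δ_{mn}(t))`. -/
theorem lyapunov_hasDerivAt
    {ι : Type*} [Fintype ι] [LinearOrder ι]
    (K : ι → ι → ℝ) (hK : ∀ m n, K m n = K n m)
    (D : ι → ℝ) (hD : ∀ m, 0 < D m)
    (θs : ι → ℝ) (Ps : ι → ℝ)
    (hPs : ∀ m, Ps m = ∑ n, K m n * Real.sin (θs m - θs n))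
    (θ : ℝ → ι → ℝ) (hdiff : ∀ m, Differentiable ℝ (fun t => θ t m))
    (hswing : ∀ t m, deriv (fun s => θ s m) t =
      (D m)⁻¹ * (Ps m - ∑ n, K m n * Real.sin (θ t m - θ t n))) :
    ∀ t, HasDerivAt (fun t => ∑ m, (1 / 2) * D m * (θs m - θ t m) ^ 2)
      (∑ p ∈ Finset.univ.filter (fun p : ι × ι => p.1 < p.2),
        K p.1 p.2 * ((θ t p.1 - θ t p.2) - (θs p.1 - θs p.2))
          * (Real.sin (θs p.1 - θs p.2) - Real.sin (θ t p.1 - θ t p.2))) t := by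
  intro t
  set w : ι → ℝ := fun m => (D m)⁻¹ * (Ps m - ∑ n, K m n * Real.sin (θ t m - θ t n)) with hw
  have hder : ∀ m, HasDerivAt (fun s => θ s m) (w m) t := by
    intro m
    have h := (hdiff m t).hasDerivAt
    rw [hswing t m] at h
    exact h
  have hterm : ∀ m ∈ (univ : Finset ι),
      HasDerivAt (fun s => (1 / 2) * D m * (θs m - θ s m) ^ 2)
        ((1 / 2) * D m * (2 * (θs m - θ t m) ^ 1 * (-(w m)))) t := by
    intro m _
    exact (((hder m).const_sub (θs m)).pow 2).const_mul ((1 / 2) * D m)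
  have hsum := HasDerivAt.fun_sum hterm
  refine hsum.congr_deriv (Eq.symm ?_)
  have hstep : ∀ m, (1 / 2) * D m * (2 * (θs m - θ t m) ^ 1 * (-(w m)))
      = ∑ n, K m n * (θ t m - θs m) * (Real.sin (θs m - θs n) - Real.sin (θ t m - θ t n)) := by
    intro m
    have hDne : D m ≠ 0 := (hD m).ne'
    have : (1 / 2) * D m * (2 * (θs m - θ t m) ^ 1 * (-(w m)))
        = (θ t m - θs m) * (Ps m - ∑ n, K m n * Real.sin (θ t m - θ t n)) := by
      rw [hw]; field_simp; ring
    rw [this, hPs, ← Finset.sum_sub_distrib, Finset.mul_sum]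
    exact Finset.sum_congr rfl (fun n _ => by ring)
  rw [Finset.sum_congr rfl (fun m _ => hstep m), ← Fintype.sum_prod_type',
    pair_split (fun p : ι × ι => K p.1 p.2 * (θ t p.1 - θs p.1)
      * (Real.sin (θs p.1 - θs p.2) - Real.sin (θ t p.1 - θ t p.2)))]
  have hdiag : ∀ m : ι, K m m * (θ t m - θs m)
      * (Real.sin (θs m - θs m) - Real.sin (θ t m - θ t m)) = 0 := by
    intro m; simp
  rw [Finset.sum_congr rfl (fun m _ => hdiag m), Finset.sum_const_zero, add_zero]
  refine (Finset.sum_congr rfl (fun p _ => ?_)).symm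
  have h1 : Real.sin (θs p.2 - θs p.1) = -Real.sin (θs p.1 - θs p.2) := by
    rw [← Real.sin_neg, neg_sub]
  have h2 : Real.sin (θ t p.2 - θ t p.1) = -Real.sin (θ t p.1 - θ t p.2) := by
    rw [← Real.sin_neg, neg_sub]
  simp only [Prod.fst_swap, Prod.snd_swap, h1, h2, ← hK p.1 p.2]
  ring
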